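/- Let (r,ρ) ∈ 𝒩𝒞 and let M = varprojlim(M_{r,ρ}, σ_{r,ρ}). Then the set E(M) of end-points of M is dense in M. -/

import Mathlib

/-- `(r, ρ) ∈ 𝒩𝒞`: `0 < r < 1 < ρ` and `r^k = ρ^ℓ` only for `k = ℓ = 0`. -/
def NC (r ρ : ℝ) : Prop :=
  0 < r ∧ r < 1 ∧ 1 < ρ ∧ ∀ k l : ℤ, r ^ k = ρ ^ l ↔ k = 0 ∧ l = 0

/-- The Mahavier product `M_{r,ρ} ⊆ [0,1]^ℕ`. -/
def Mset (r ρ : ℝ) : Set (ℕ → ℝ) :=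
  {x | (∀ i, x i ∈ Set.Icc (0:ℝ) 1) ∧ ∀ i, x (i + 1) = r * x i ∨ x (i + 1) = ρ * x i}

/-- The shift map `σ_{r,ρ}` on `M_{r,ρ}`. -/
def shiftM (r ρ : ℝ) (x : Mset r ρ) : Mset r ρ :=
  ⟨fun i => x.1 (i + 1), fun i => x.2.1 (i + 1), fun i => x.2.2 (i + 1)⟩

/-- The inverse limit `varprojlim(X, f)` of a single map `f : X → X`. -/
def invLimit {X : Type*} (f : X → X) : Set (ℕ → X) :=
  {x | ∀ i, x i = f (x (i + 1))}

/-- The shift map on the inverse limit `varprojlim(X, f)`. -/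
def invShift {X : Type*} (f : X → X) (x : invLimit f) : invLimit f :=
  ⟨fun i => x.1 (i + 1), fun i => x.2 (i + 1)⟩

/-- A subset `A` of a topological space is an arc if it is homeomorphic to `[0,1]`. -/
def IsArc {X : Type*} [TopologicalSpace X] (A : Set X) : Prop :=
  Nonempty (Set.Icc (0:ℝ) 1 ≃ₜ A)

/-- `x` is an end-point of the arc `A` if some homeomorphism `φ : [0,1] → A` has `φ 0 = x`. -/
def IsEndpointOfArc {X : Type*} [TopologicalSpace X] (A : Set X) (x : X) : Prop :=
  ∃ φ : Set.Icc (0:ℝ) 1 ≃ₜ A, ((φ ⟨0, by norm_num⟩ : A) : X) = x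

/-- `x` is an end-point of the space `X` if it is an end-point of every arc in `X`
containing it. -/
def IsEndpoint {X : Type*} [TopologicalSpace X] (x : X) : Prop :=
  ∀ A : Set X, IsArc A → x ∈ A → IsEndpointOfArc A x

namespace Dense15
variable {r ρ : ℝ}

/-- two-sided coordinate -/
noncomputable def Y (x : invLimit (shiftM r ρ)) (n : ℤ) : ℝ :=
  ((x.1 ((-n) ⊔ 0).toNat).1 (n ⊔ 0).toNat)

lemma coord_step (x : invLimit (shiftM r ρ)) (i j : ℕ) :
    (x.1 i).1 j = (x.1 (i+1)).1 (j+1) := by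
  have h := x.2 i
  rw [h]; rfl

lemma coord_add (x : invLimit (shiftM r ρ)) (i j m : ℕ) :
    (x.1 i).1 j = (x.1 (i+m)).1 (j+m) := by
  induction m with
  | zero => rfl
  | succ m ih => rw [ih, coord_step]; ring_nf

lemma Y_eq (x : invLimit (shiftM r ρ)) (i j : ℕ) :
    Y x ((j:ℤ) - (i:ℤ)) = (x.1 i).1 j := by
  unfold Y
  rcases le_total i j with h | h
  · obtain ⟨m, rfl⟩ : ∃ m, j = m + i := ⟨j - i, by omega⟩
    have h1 : ((-(((m+i:ℕ):ℤ) - i)) ⊔ 0).toNat = 0 := by omega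
    have h2 : ((((m+i:ℕ):ℤ) - i) ⊔ 0).toNat = m := by omega
    rw [h1, h2, coord_add x 0 m i, Nat.zero_add]
  · obtain ⟨m, rfl⟩ : ∃ m, i = m + j := ⟨i - j, by omega⟩
    have h1 : ((-(((j:ℤ)) - (m+j:ℕ))) ⊔ 0).toNat = m := by omega
    have h2 : ((((j:ℤ)) - (m+j:ℕ)) ⊔ 0).toNat = 0 := by omega
    rw [h1, h2, coord_add x m 0 j, Nat.zero_add]

lemma Y_spec (x : invLimit (shiftM r ρ)) (n : ℤ) :
    Y x n = (x.1 (n.natAbs + 1)).1 ((n + (n.natAbs + 1)).toNat) := by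
  have h : ((((n + (n.natAbs + 1)).toNat : ℕ) : ℤ)) - ((n.natAbs + 1 : ℕ) : ℤ) = n := by
    omega
  rw [← Y_eq x (n.natAbs + 1) ((n + (n.natAbs + 1)).toNat), h]

lemma Y_mem (x : invLimit (shiftM r ρ)) (n : ℤ) : Y x n ∈ Set.Icc (0:ℝ) 1 :=
  (x.1 _).2.1 _

lemma Y_step (x : invLimit (shiftM r ρ)) (n : ℤ) :
    Y x (n+1) = r * Y x n ∨ Y x (n+1) = ρ * Y x n := by
  have e1 := Y_spec x n
  have e2 : Y x (n+1) = (x.1 (n.natAbs + 1)).1 ((n + (n.natAbs + 1)).toNat + 1) := by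
    have h : ((((n + (n.natAbs + 1)).toNat + 1 : ℕ) : ℤ)) - ((n.natAbs + 1 : ℕ) : ℤ) = n + 1 := by
      omega
    rw [← Y_eq x (n.natAbs + 1) ((n + (n.natAbs + 1)).toNat + 1), h]
  rw [e1, e2]
  exact (x.1 (n.natAbs + 1)).2.2 _

lemma ext_of_Y {x y : invLimit (shiftM r ρ)} (h : ∀ n, Y x n = Y y n) : x = y := by
  apply Subtype.ext; funext i; apply Subtype.ext; funext j
  have := h ((j:ℤ) - i)
  rwa [Y_eq, Y_eq] at this

lemma Y_continuous (n : ℤ) :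
    Continuous (fun x : invLimit (shiftM r ρ) => Y x n) := by
  unfold Y
  exact (continuous_apply _).comp (continuous_subtype_val.comp
    ((continuous_apply _).comp continuous_subtype_val))

end Dense15

namespace Dense15
variable {r ρ : ℝ}

lemma Y_pos (hr : 0 < r) (hρ : 0 < ρ) {x : invLimit (shiftM r ρ)}
    (h0 : 0 < Y x 0) : ∀ n : ℤ, 0 < Y x n := by
  intro n
  induction n using Int.induction_on with
  | zero => exact h0
  | succ m ih =>
    rcases Y_step x m with h | h <;> rw [h] <;> positivity
  | pred m ih =>
    rw [show -(m:ℤ) - 1 = -(m+1) by ring]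
    rcases Y_step x (-(m+1)) with h | h <;>
    · rw [show (-(m:ℤ)) = -(m+1)+1 by ring] at ih
      rw [h] at ih
      nlinarith [ih]

lemma Y_pos_all (hr : 0 < r) (hρ : 0 < ρ) {x : invLimit (shiftM r ρ)} {n₀ : ℤ}
    (h0 : 0 < Y x n₀) : ∀ n : ℤ, 0 < Y x n := by
  apply Y_pos hr hρ
  by_contra hcon
  push_neg at hcon
  have hz : Y x 0 = 0 := le_antisymm hcon (Y_mem x 0).1
  have hall : ∀ n : ℤ, Y x n = 0 := by
    intro n
    induction n using Int.induction_on with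
    | zero => exact hz
    | succ m ih => rcases Y_step x m with h | h <;> rw [h, ih, mul_zero]
    | pred m ih =>
      rw [show -(m:ℤ) - 1 = -(m+1) by ring]
      rcases Y_step x (-(m+1)) with h | h <;>
      · rw [show (-(m:ℤ)) = -(m+1)+1 by ring] at ih
        rw [h] at ih
        rcases mul_eq_zero.mp ih with h2 | h2
        · nlinarith
        · exact h2
  rw [hall n₀] at h0; exact lt_irrefl _ h0

/-- on a preconnected set of positive points, the step type is the same at each level -/
lemma same_step (hr : 0 < r) (hr1 : r < 1) (hρ : 1 < ρ) {B : Set (invLimit (shiftM r ρ))}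
    (hB : IsPreconnected B) (hpos : ∀ z ∈ B, 0 < Y z 0) (n : ℤ) :
    (∀ z ∈ B, Y z (n+1) = r * Y z n) ∨ (∀ z ∈ B, Y z (n+1) = ρ * Y z n) := by
  set m : ℝ := (r + ρ)/2 with hm
  have hrm : r < m := by rw [hm]; linarith
  have hmρ : m < ρ := by rw [hm]; linarith
  set U : Set (invLimit (shiftM r ρ)) := {z | Y z (n+1) < m * Y z n} with hU
  set V : Set (invLimit (shiftM r ρ)) := {z | m * Y z n < Y z (n+1)} with hV
  have hUo : IsOpen U := isOpen_lt (Y_continuous _) (continuous_const.mul (Y_continuous n))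
  have hVo : IsOpen V := isOpen_lt (continuous_const.mul (Y_continuous n)) (Y_continuous _)
  have hdisj : Disjoint U V := by
    rw [Set.disjoint_iff]
    rintro z ⟨h1, h2⟩
    rw [hU, Set.mem_setOf_eq] at h1
    rw [hV, Set.mem_setOf_eq] at h2
    exact absurd (h1.trans h2) (lt_irrefl _)
  have hsub : B ⊆ U ∪ V := by
    intro z hz
    have hzp : 0 < Y z n := Y_pos_all hr (by linarith) (n₀ := 0) (hpos z hz) n
    rcases Y_step z n with h | h
    · left; rw [hU, Set.mem_setOf_eq, h]; nlinarith
    · right; rw [hV, Set.mem_setOf_eq, h]; nlinarith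
  rcases hB.subset_or_subset hUo hVo hdisj hsub with h | h
  · left
    intro z hz
    have hzp : 0 < Y z n := Y_pos_all hr (by linarith) (n₀ := 0) (hpos z hz) n
    rcases Y_step z n with h2 | h2
    · exact h2
    · exfalso; have := h hz; rw [hU, Set.mem_setOf_eq, h2] at this; nlinarith
  · right
    intro z hz
    have hzp : 0 < Y z n := Y_pos_all hr (by linarith) (n₀ := 0) (hpos z hz) n
    rcases Y_step z n with h2 | h2
    · exfalso; have := h hz; rw [hV, Set.mem_setOf_eq, h2] at this; nlinarith
    · exact h2

lemma leg_scale (hr : 0 < r) (hr1 : r < 1) (hρ : 1 < ρ) {B : Set (invLimit (shiftM r ρ))}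
    (hB : IsPreconnected B) (hpos : ∀ z ∈ B, 0 < Y z 0)
    {x w : invLimit (shiftM r ρ)} (hx : x ∈ B) (hw : w ∈ B) :
    ∀ n : ℤ, Y w n * Y x 0 = Y x n * Y w 0 := by
  intro n
  induction n using Int.induction_on with
  | zero => ring
  | succ m ih =>
    rcases same_step hr hr1 hρ hB hpos m with h | h <;>
    · rw [h x hx, h w hw]; nlinarith [ih]
  | pred m ih =>
    rw [show -(m:ℤ) - 1 = -(m+1) by ring]
    rw [show (-(m:ℤ)) = -(m+1)+1 by ring] at ih
    rcases same_step hr hr1 hρ hB hpos (-(m+1)) with h | h <;>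
      rw [h x hx, h w hw] at ih
    · exact mul_left_cancel₀ (ne_of_gt hr) (by ring_nf; ring_nf at ih; linarith [ih])
    · exact mul_left_cancel₀ (by positivity : (ρ:ℝ) ≠ 0) (by ring_nf; ring_nf at ih; linarith [ih])

end Dense15

namespace Dense15

/-- reversal homeomorphism of [0,1] -/
noncomputable def revIcc : Set.Icc (0:ℝ) 1 ≃ₜ Set.Icc (0:ℝ) 1 where
  toFun t := ⟨1 - t.1, ⟨by linarith [t.2.2], by linarith [t.2.1]⟩⟩
  invFun t := ⟨1 - t.1, ⟨by linarith [t.2.2], by linarith [t.2.1]⟩⟩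
  left_inv t := by ext; simp
  right_inv t := by ext; simp
  continuous_toFun := Continuous.subtype_mk (by fun_prop)
    (fun t => ⟨by linarith [t.2.2], by linarith [t.2.1]⟩)
  continuous_invFun := Continuous.subtype_mk (by fun_prop)
    (fun t => ⟨by linarith [t.2.2], by linarith [t.2.1]⟩)

variable {r ρ : ℝ}

theorem endpoint_of_sup (hr : 0 < r) (hr1 : r < 1) (hρ : 1 < ρ)
    (x : invLimit (shiftM r ρ)) (H : ∀ ε : ℝ, 0 < ε → ∃ n : ℤ, 1 - ε < Y x n) :
    IsEndpoint x := by
  intro A hA hxA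
  obtain ⟨φ⟩ := hA
  set s : Set.Icc (0:ℝ) 1 := φ.symm ⟨x, hxA⟩ with hs
  rcases eq_or_lt_of_le s.2.1 with h0 | h0
  · -- s = 0
    refine ⟨φ, ?_⟩
    have : (⟨0, by norm_num⟩ : Set.Icc (0:ℝ) 1) = s := Subtype.ext h0
    rw [this, hs, Homeomorph.apply_symm_apply]
  rcases eq_or_lt_of_le s.2.2 with h1 | h1
  · -- s = 1
    refine ⟨revIcc.trans φ, ?_⟩
    have : revIcc (⟨0, by norm_num⟩ : Set.Icc (0:ℝ) 1) = s := by
      apply Subtype.ext; simp [revIcc, ← h1]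
    simp only [Homeomorph.trans_apply, this, hs, Homeomorph.apply_symm_apply]
  -- hard case: 0 < s < 1
  exfalso
  -- basic facts
  have hx0 : 0 < Y x 0 := by
    obtain ⟨n, hn⟩ := H (1/2) (by norm_num)
    exact Y_pos_all hr (by linarith) (n₀ := n) (by linarith) 0
  -- the map Φ
  set Φ : Set.Icc (0:ℝ) 1 → ℝ := fun t => Y ((φ t : A) : invLimit (shiftM r ρ)) 0 with hΦ
  have hΦc : Continuous Φ :=
    (Y_continuous 0).comp (continuous_subtype_val.comp φ.continuous)
  have hΦs : Φ s = Y x 0 := by rw [hΦ]; simp only [hs, Homeomorph.apply_symm_apply]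
  -- open set where Φ > Y x 0 / 2
  have hWopen : IsOpen {t : Set.Icc (0:ℝ) 1 | Y x 0 / 2 < Φ t} :=
    isOpen_lt continuous_const hΦc
  have hsW : s ∈ {t : Set.Icc (0:ℝ) 1 | Y x 0 / 2 < Φ t} := by
    rw [Set.mem_setOf_eq, hΦs]; linarith
  obtain ⟨ε₁, hε₁, hball⟩ := Metric.isOpen_iff.mp hWopen s hsW
  set δ : ℝ := min (ε₁/2) (min s.1 (1 - s.1)) with hδ
  have hδpos : 0 < δ := by
    apply lt_min (by linarith)
    exact lt_min h0 (by linarith)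
  set u : ℝ := s.1 - δ with hu
  set v : ℝ := s.1 + δ with hv
  have huv : ∀ t ∈ Set.Icc u v, t ∈ Set.Icc (0:ℝ) 1 := by
    rintro t ⟨ht1, ht2⟩
    constructor
    · have : δ ≤ s.1 := le_trans (min_le_right _ _) (min_le_left _ _)
      simp only [hu] at ht1; linarith
    · have : δ ≤ 1 - s.1 := le_trans (min_le_right _ _) (min_le_right _ _)
      simp only [hv] at ht2; linarith
  -- inclusion map
  set T : ℝ → invLimit (shiftM r ρ) :=
    fun t => ((φ ⟨max 0 (min 1 t), by
      constructor
      · exact le_max_left 0 _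
      · exact max_le (by norm_num) (min_le_left 1 t)⟩ : A) : invLimit (shiftM r ρ)) with hT
  have hTc : Continuous T := by
    apply continuous_subtype_val.comp
    apply φ.continuous.comp
    exact Continuous.subtype_mk (by fun_prop) _
  have hTeq : ∀ t (ht : t ∈ Set.Icc (0:ℝ) 1), T t = ((φ ⟨t, ht⟩ : A) : invLimit (shiftM r ρ)) := by
    intro t ht
    simp only [hT]
    exact congrArg (fun z => ((φ z : A) : invLimit (shiftM r ρ)))
      (Subtype.ext (by simp only; rw [min_eq_right ht.2, max_eq_right ht.1]))
  have hTs : T s.1 = x := by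
    rw [hTeq s.1 s.2]
    have : (⟨s.1, s.2⟩ : Set.Icc (0:ℝ) 1) = s := rfl
    rw [this, hs, Homeomorph.apply_symm_apply]
  -- the connected set B
  set B : Set (invLimit (shiftM r ρ)) := T '' (Set.Icc u v) with hB
  have hBconn : IsPreconnected B := (isPreconnected_Icc).image T hTc.continuousOn
  have hball' : ∀ t ∈ Set.Icc u v, Y x 0 / 2 < Y (T t) 0 := by
    intro t ht
    have htm := huv t ht
    have hmem : (⟨t, htm⟩ : Set.Icc (0:ℝ) 1) ∈ Metric.ball s ε₁ := by
      rw [Metric.mem_ball, Subtype.dist_eq, Real.dist_eq]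
      have h1 : |t - s.1| ≤ δ := by
        rw [abs_le]; constructor <;> [simp only [hu] at ht; simp only [hv] at ht] <;>
          [linarith [ht.1]; linarith [ht.2]]
      have h2 : δ ≤ ε₁/2 := min_le_left _ _
      linarith
    have := hball hmem
    rw [Set.mem_setOf_eq] at this
    rw [hTeq t htm]
    exact this
  have hpos : ∀ z ∈ B, 0 < Y z 0 := by
    rintro z ⟨t, ht, rfl⟩
    linarith [hball' t ht]
  have hxB : x ∈ B := by
    rw [hB, ← hTs]
    exact ⟨s.1, ⟨by simp [hu]; linarith, by simp [hv]; linarith⟩, rfl⟩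
  -- ψ and its injectivity on [u,v]
  set ψ : ℝ → ℝ := fun t => Y (T t) 0 with hψ
  have hψc : Continuous ψ := (Y_continuous 0).comp hTc
  have hTinj : ∀ t₁ ∈ Set.Icc u v, ∀ t₂ ∈ Set.Icc u v, T t₁ = T t₂ → t₁ = t₂ := by
    intro t₁ ht₁ t₂ ht₂ hTe
    have h₁ := huv t₁ ht₁
    have h₂ := huv t₂ ht₂
    rw [hTeq t₁ h₁, hTeq t₂ h₂] at hTe
    have := φ.injective (Subtype.val_injective hTe)
    exact congrArg Subtype.val this
  have hψinj : ∀ t₁ ∈ Set.Icc u v, ∀ t₂ ∈ Set.Icc u v, ψ t₁ = ψ t₂ → t₁ = t₂ := by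
    intro t₁ ht₁ t₂ ht₂ hψe
    apply hTinj t₁ ht₁ t₂ ht₂
    apply ext_of_Y
    intro n
    have hmem₁ : T t₁ ∈ B := ⟨t₁, ht₁, rfl⟩
    have hmem₂ : T t₂ ∈ B := ⟨t₂, ht₂, rfl⟩
    have hscale := leg_scale hr hr1 hρ hBconn hpos hmem₁ hmem₂ n
    have hp1 : 0 < Y (T t₁) 0 := hpos _ hmem₁
    rw [hψ] at hψe
    simp only at hψe
    rw [← hψe] at hscale
    exact (mul_right_cancel₀ (ne_of_gt hp1) hscale).symm
  have hsuv : s.1 ∈ Set.Icc u v := ⟨by simp [hu]; linarith, by simp [hv]; linarith⟩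
  have hψs : ψ s.1 = Y x 0 := by rw [hψ]; simp only; rw [hTs]
  -- find a point with larger value
  have hbig : ∃ t ∈ Set.Icc u v, ψ s.1 < ψ t := by
    by_contra hcon
    push_neg at hcon
    have hus : u ≤ s.1 := by simp [hu]; linarith
    have hsv : s.1 ≤ v := by simp [hv]; linarith
    have huu : u ∈ Set.Icc u v := ⟨le_refl _, by simp [hu, hv]; linarith⟩
    have hvv : v ∈ Set.Icc u v := ⟨by simp [hu, hv]; linarith, le_refl _⟩
    have hψu : ψ u < ψ s.1 := by
      rcases lt_or_eq_of_le (hcon u huu) with h | h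
      · exact h
      · exfalso
        have := hψinj u huu s.1 hsuv h
        simp only [hu] at this; linarith
    have hψv : ψ v < ψ s.1 := by
      rcases lt_or_eq_of_le (hcon v hvv) with h | h
      · exact h
      · exfalso
        have := hψinj v hvv s.1 hsuv h
        simp only [hv] at this; linarith
    set y₀ : ℝ := (max (ψ u) (ψ v) + ψ s.1)/2 with hy₀
    have hy₀u : ψ u < y₀ := by
      have := le_max_left (ψ u) (ψ v)
      have := max_lt hψu hψv
      rw [hy₀]; linarith
    have hy₀v : ψ v < y₀ := by
      have := le_max_right (ψ u) (ψ v)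
      have := max_lt hψu hψv
      rw [hy₀]; linarith
    have hy₀s : y₀ < ψ s.1 := by
      have := max_lt hψu hψv
      rw [hy₀]; linarith
    obtain ⟨t₁, ht₁, hψt₁⟩ := intermediate_value_Icc hus hψc.continuousOn
      (⟨le_of_lt hy₀u, le_of_lt hy₀s⟩ : y₀ ∈ Set.Icc (ψ u) (ψ s.1))
    obtain ⟨t₂, ht₂, hψt₂⟩ := intermediate_value_Icc' hsv hψc.continuousOn
      (⟨le_of_lt hy₀v, le_of_lt hy₀s⟩ : y₀ ∈ Set.Icc (ψ v) (ψ s.1))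
    have ht₁uv : t₁ ∈ Set.Icc u v := ⟨ht₁.1, le_trans ht₁.2 hsv⟩
    have ht₂uv : t₂ ∈ Set.Icc u v := ⟨le_trans hus ht₂.1, ht₂.2⟩
    have : t₁ = t₂ := hψinj t₁ ht₁uv t₂ ht₂uv (by rw [hψt₁, hψt₂])
    have ht₁s : t₁ ≠ s.1 := by
      intro h; rw [h] at hψt₁; linarith
    have : t₁ = s.1 := le_antisymm ht₁.2 (this ▸ ht₂.1)
    exact ht₁s this
  obtain ⟨t, ht, hψt⟩ := hbig
  set w : invLimit (shiftM r ρ) := T t with hw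
  have hwB : w ∈ B := ⟨t, ht, rfl⟩
  have hw0 : Y x 0 < Y w 0 := by rw [← hψs]; exact hψt
  have hw0p : 0 < Y w 0 := hpos _ hwB
  obtain ⟨n, hn⟩ := H (1 - Y x 0 / Y w 0) (by
    rw [sub_pos, div_lt_one hw0p]; exact hw0)
  have hscale := leg_scale hr hr1 hρ hBconn hpos hxB hwB n
  have hYxn : Y x 0 / Y w 0 < Y x n := by linarith
  have hwn : Y w n ≤ 1 := (Y_mem w n).2
  -- Y w n * Y x 0 = Y x n * Y w 0 > (Y x 0 / Y w 0) * Y w 0 = Y x 0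
  have : Y x 0 < Y w n * Y x 0 := by
    rw [hscale]
    calc Y x 0 = (Y x 0 / Y w 0) * Y w 0 := by field_simp
    _ < Y x n * Y w 0 := by
        apply mul_lt_mul_of_pos_right hYxn hw0p
  nlinarith [hx0]

end Dense15

namespace Dense15

lemma exists_small {θ : ℝ} (hθ : Irrational θ) {d : ℝ} (hd : 0 < d) :
    ∃ m n : ℤ, 0 < m*θ + n ∧ m*θ + n < d := by
  obtain ⟨N₀, hN₀⟩ := exists_nat_one_div_lt hd
  set N : ℕ := N₀ + 1 with hN
  have hNpos : (0:ℝ) < N := by positivity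
  have hNd : 1 / (N:ℝ) < d := by rw [hN]; push_cast; push_cast at hN₀; exact hN₀
  set f : ℕ → ℝ := fun j => Int.fract ((j:ℝ) * θ) with hf
  have hf01 : ∀ j, 0 ≤ f j ∧ f j < 1 := fun j => ⟨Int.fract_nonneg _, Int.fract_lt_one _⟩
  have hinj : Function.Injective f := by
    intro j₁ j₂ h
    by_contra hne
    rw [hf] at h
    simp only at h
    obtain ⟨z, hz⟩ := Int.fract_eq_fract.mp h
    have : ((j₁:ℤ) - j₂ : ℤ) ≠ 0 := by
      intro hc; apply hne; exact_mod_cast sub_eq_zero.mp hc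
    have h2 : (((j₁:ℤ) - (j₂:ℤ) : ℤ) : ℝ) * θ = (z:ℝ) := by push_cast; ring_nf; ring_nf at hz; linarith [hz]
    exact (hθ.intCast_mul this).ne_int z h2
  set g : ℕ → Fin N := fun j => ⟨(⌊f j * N⌋).toNat, by
    have h1 : (0:ℝ) ≤ f j * N := mul_nonneg (hf01 j).1 (le_of_lt hNpos)
    have h2 : f j * N < N := by
      have := (hf01 j).2
      calc f j * N < 1 * N := by apply mul_lt_mul_of_pos_right this hNpos
      _ = N := one_mul _
    have h3 : ⌊f j * N⌋ < (N:ℤ) := Int.floor_lt.mpr (by exact_mod_cast h2)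
    have h4 : 0 ≤ ⌊f j * N⌋ := Int.floor_nonneg.mpr h1
    omega⟩ with hg
  obtain ⟨j₁, j₂, hne, hgeq⟩ := Finite.exists_ne_map_eq_of_infinite g
  have hfloor : ⌊f j₁ * N⌋ = ⌊f j₂ * N⌋ := by
    have h1 : (⌊f j₁ * N⌋).toNat = (⌊f j₂ * N⌋).toNat := congrArg Fin.val hgeq
    have h4 : 0 ≤ ⌊f j₁ * N⌋ := Int.floor_nonneg.mpr (mul_nonneg (hf01 j₁).1 (le_of_lt hNpos))
    have h5 : 0 ≤ ⌊f j₂ * N⌋ := Int.floor_nonneg.mpr (mul_nonneg (hf01 j₂).1 (le_of_lt hNpos))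
    omega
  have hclose : |f j₁ - f j₂| < 1 / N := by
    have h1 := Int.floor_le (f j₁ * N)
    have h2 := Int.lt_floor_add_one (f j₁ * N)
    have h3 := Int.floor_le (f j₂ * N)
    have h4 := Int.lt_floor_add_one (f j₂ * N)
    rw [hfloor] at h1 h2
    rw [abs_lt]
    constructor
    · have hlt : f j₂ - f j₁ < 1 / N := by rw [lt_div_iff₀ hNpos]; nlinarith
      linarith
    · rw [lt_div_iff₀ hNpos]; nlinarith
  have hfne : f j₁ ≠ f j₂ := fun h => hne (hinj h)
  -- g0 = f j₁ - f j₂ = (j₁ - j₂)θ - (⌊j₁θ⌋ - ⌊j₂θ⌋)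
  have hrepr : f j₁ - f j₂ = (((j₁:ℤ) - j₂ : ℤ):ℝ)*θ + ((⌊(j₂:ℝ)*θ⌋ - ⌊(j₁:ℝ)*θ⌋ : ℤ):ℝ) := by
    rw [hf]; simp only [Int.fract]; push_cast; ring
  rcases lt_or_gt_of_ne hfne with h | h
  · refine ⟨(j₂:ℤ) - j₁, ⌊(j₁:ℝ)*θ⌋ - ⌊(j₂:ℝ)*θ⌋, ?_, ?_⟩
    · have : f j₂ - f j₁ > 0 := by linarith
      have e : f j₂ - f j₁ = (((j₂:ℤ) - j₁ : ℤ):ℝ)*θ + ((⌊(j₁:ℝ)*θ⌋ - ⌊(j₂:ℝ)*θ⌋ : ℤ):ℝ) := by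
        rw [hf]; simp only [Int.fract]; push_cast; ring
      rw [← e] at *; push_cast; push_cast at e; linarith [e, this]
    · have e : f j₂ - f j₁ = (((j₂:ℤ) - j₁ : ℤ):ℝ)*θ + ((⌊(j₁:ℝ)*θ⌋ - ⌊(j₂:ℝ)*θ⌋ : ℤ):ℝ) := by
        rw [hf]; simp only [Int.fract]; push_cast; ring
      have habs : f j₂ - f j₁ < 1/N := by rw [abs_lt] at hclose; linarith [hclose.1]
      push_cast; push_cast at e; linarith [e, habs, hNd]
  · refine ⟨(j₁:ℤ) - j₂, ⌊(j₂:ℝ)*θ⌋ - ⌊(j₁:ℝ)*θ⌋, ?_, ?_⟩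
    · have : f j₁ - f j₂ > 0 := by linarith
      push_cast; push_cast at hrepr; linarith [hrepr, this]
    · have habs : f j₁ - f j₂ < 1/N := by rw [abs_lt] at hclose; linarith [hclose.2]
      push_cast; push_cast at hrepr; linarith [hrepr, habs, hNd]

lemma natCombo₀ {θ : ℝ} (hθpos : 0 < θ) (hθ : Irrational θ) {t d : ℝ} (ht : 0 ≤ t)
    (hd : 0 < d) : ∃ j i : ℕ, t < (j:ℝ)*θ - i ∧ (j:ℝ)*θ - i < t + d := by
  set d' := min d 1 with hd'
  have hd'pos : 0 < d' := lt_min hd one_pos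
  have hd'le : d' ≤ d := min_le_left _ _
  have hd'1 : d' ≤ 1 := min_le_right _ _
  obtain ⟨m, n, hg1, hg2⟩ := exists_small hθ hd'pos
  -- produce m' ≥ 1, n' ≤ 0 with g* := m'θ + n' ∈ (0, d')
  have key : ∃ m' n' : ℤ, 1 ≤ m' ∧ n' ≤ 0 ∧ 0 < m'*θ + n' ∧ m'*θ + n' < d' := by
    rcases le_or_gt m 0 with hm | hm
    · -- m ≤ 0; then n ≥ 1
      have hn1 : (1:ℤ) ≤ n := by
        by_contra hc
        push_neg at hc
        have : (n:ℝ) ≤ 0 := by exact_mod_cast Int.lt_add_one_iff.mp hc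
        nlinarith [hg1, mul_nonpos_of_nonpos_of_nonneg (by exact_mod_cast hm : (m:ℝ) ≤ 0) (le_of_lt hθpos)]
      set g : ℝ := m*θ + n with hgdef
      set K : ℤ := ⌊θ/g⌋ with hK
      have hK0 : 0 ≤ K := Int.floor_nonneg.mpr (le_of_lt (div_pos hθpos hg1))
      have hKb1 : (K:ℝ)*g ≤ θ := by
        have := Int.floor_le (θ/g)
        calc (K:ℝ)*g ≤ (θ/g)*g := by apply mul_le_mul_of_nonneg_right this (le_of_lt hg1)
        _ = θ := by field_simp
      have hKb2 : θ < (K:ℝ)*g + g := by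
        have := Int.lt_floor_add_one (θ/g)
        have h2 : θ/g < (K:ℝ) + 1 := by exact_mod_cast this
        calc θ = (θ/g)*g := by field_simp
        _ < ((K:ℝ)+1)*g := by apply mul_lt_mul_of_pos_right h2 hg1
        _ = (K:ℝ)*g + g := by ring
      have hKm : K*m ≤ 0 := mul_nonpos_of_nonneg_of_nonpos hK0 hm
      have hne : θ - K*g ≠ 0 := by
        intro hc
        have h2 : ((1 - K*m : ℤ):ℝ) * θ = ((K*n : ℤ):ℝ) := by
          push_cast
          rw [hgdef] at hc
          nlinarith [hc]
        exact (hθ.intCast_mul (by omega : (1 - K*m : ℤ) ≠ 0)).ne_int (K*n) h2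
      refine ⟨1 - K*m, -(K*n), by omega, ?_, ?_, ?_⟩
      · have : 0 ≤ K*n := mul_nonneg hK0 (by omega)
        omega
      · have he : ((1 - K*m : ℤ):ℝ)*θ + ((-(K*n):ℤ):ℝ) = θ - K*g := by
          rw [hgdef]; push_cast; ring
        rw [he]
        rcases lt_or_eq_of_le (sub_nonneg.mpr hKb1) with h | h
        · exact h
        · exact absurd h.symm hne
      · have he : ((1 - K*m : ℤ):ℝ)*θ + ((-(K*n):ℤ):ℝ) = θ - K*g := by
          rw [hgdef]; push_cast; ring
        rw [he]; linarith
    · -- m ≥ 1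
      have hn0 : n ≤ 0 := by
        by_contra hc
        push_neg at hc
        have h1 : (1:ℝ) ≤ n := by exact_mod_cast hc
        have h2 : (0:ℝ) < m*θ := mul_pos (by exact_mod_cast hm) hθpos
        linarith [hg2, hd'1]
      exact ⟨m, n, hm, hn0, hg1, hg2⟩
  obtain ⟨m', n', hm', hn', hg1', hg2'⟩ := key
  set gs : ℝ := m'*θ + n' with hgs
  -- least M with t < M * gs
  have hex : ∃ M : ℕ, t < M * gs := by
    obtain ⟨M₀, hM₀⟩ := exists_nat_gt (t / gs)
    exact ⟨M₀, by rw [div_lt_iff₀ hg1'] at hM₀; linarith⟩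
  set M := Nat.find hex with hM
  have hMspec : t < M * gs := Nat.find_spec hex
  have hM1 : 1 ≤ M := by
    rcases Nat.eq_zero_or_pos M with h | h
    · exfalso; have := hMspec; rw [h] at this; push_cast at this; linarith
    · exact h
  have hMpred : ¬ (t < (M - 1 : ℕ) * gs) := Nat.find_min hex (by omega)
  push_neg at hMpred
  have hMub : (M:ℝ) * gs < t + d' := by
    have hcast : ((M - 1 : ℕ):ℝ) = (M:ℝ) - 1 := by
      have : (1:ℕ) ≤ M := hM1
      push_cast [this]; ring
    rw [hcast] at hMpred
    nlinarith [hMpred, hg2']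
  refine ⟨M * m'.toNat, M * (-n').toNat, ?_, ?_⟩
  · have he : ((M * m'.toNat : ℕ):ℝ)*θ - ((M * (-n').toNat : ℕ):ℝ) = M * gs := by
      rw [hgs]
      have h1 : (m'.toNat : ℝ) = (m' : ℝ) := by exact_mod_cast Int.toNat_of_nonneg (by omega)
      have h2 : ((-n').toNat : ℝ) = ((-n' : ℤ) : ℝ) := by exact_mod_cast Int.toNat_of_nonneg (by omega)
      push_cast [h1, h2]
      push_cast
      ring
    rw [he]; exact hMspec
  · have he : ((M * m'.toNat : ℕ):ℝ)*θ - ((M * (-n').toNat : ℕ):ℝ) = M * gs := by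
      rw [hgs]
      have h1 : (m'.toNat : ℝ) = (m' : ℝ) := by exact_mod_cast Int.toNat_of_nonneg (by omega)
      have h2 : ((-n').toNat : ℝ) = ((-n' : ℤ) : ℝ) := by exact_mod_cast Int.toNat_of_nonneg (by omega)
      push_cast [h1, h2]
      push_cast
      ring
    rw [he]; linarith


lemma natCombo {θ : ℝ} (hθpos : 0 < θ) (hθ : Irrational θ) (t : ℝ) {d : ℝ}
    (hd : 0 < d) : ∃ j i : ℕ, t < (j:ℝ)*θ - i ∧ (j:ℝ)*θ - i < t + d := by
  obtain ⟨i₀, hi₀⟩ := exists_nat_ge (-t)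
  obtain ⟨j, i, h1, h2⟩ := natCombo₀ hθpos hθ (t := t + i₀) (by linarith) hd
  refine ⟨j, i + i₀, ?_, ?_⟩ <;> push_cast <;> push_cast at h1 h2 <;> linarith


variable {r ρ : ℝ}

lemma theta_irr (hr : 0 < r) (hr1 : r < 1) (hρ : 1 < ρ)
    (hNC : ∀ k l : ℤ, r ^ k = ρ ^ l ↔ k = 0 ∧ l = 0) :
    Irrational (Real.log ρ / (-Real.log r)) := by
  have hlr : Real.log r < 0 := Real.log_neg hr hr1
  have hlρ : 0 < Real.log ρ := Real.log_pos hρ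
  rw [Irrational]
  rintro ⟨q, hq⟩
  have hden : (0:ℝ) < (q.den : ℝ) := by exact_mod_cast q.pos
  have hq' : (q.num : ℝ) / (q.den : ℝ) = Real.log ρ / (-Real.log r) := by
    rw [← hq, Rat.cast_def]
  have hcross : (q.num : ℝ) * (-Real.log r) = (q.den : ℝ) * Real.log ρ := by
    rw [div_eq_div_iff (ne_of_gt hden) (by intro hc; rw [neg_eq_zero] at hc; linarith : -Real.log r ≠ 0)] at hq'
    linarith [hq']
  -- so log (r ^ (-q.num)) = log (ρ ^ q.den)
  have hlog : Real.log (r ^ (-q.num)) = Real.log (ρ ^ (q.den : ℤ)) := by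
    rw [Real.log_zpow, Real.log_zpow]
    push_cast
    linarith [hcross]
  have hrpos : (0:ℝ) < r ^ (-q.num) := zpow_pos hr _
  have hρpos : (0:ℝ) < ρ ^ (q.den : ℤ) := zpow_pos (by linarith) _
  have heq : r ^ (-q.num) = ρ ^ (q.den : ℤ) :=
    Real.log_injOn_pos (Set.mem_Ioi.mpr hrpos) (Set.mem_Ioi.mpr hρpos) hlog
  have := (hNC (-q.num) (q.den : ℤ)).mp heq
  have hd0 : q.den ≠ 0 := q.den_nz
  omega

lemma dense_pow (hr : 0 < r) (hr1 : r < 1) (hρ : 1 < ρ)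
    (hNC : ∀ k l : ℤ, r ^ k = ρ ^ l ↔ k = 0 ∧ l = 0)
    {a b : ℝ} (ha : 0 < a) (hab : a < b) :
    ∃ i j : ℕ, 1 ≤ i ∧ 1 ≤ j ∧ a < r^i * ρ^j ∧ r^i * ρ^j < b := by
  -- first: unrestricted version
  have main : ∀ a b : ℝ, 0 < a → a < b → ∃ i j : ℕ, a < r^i * ρ^j ∧ r^i * ρ^j < b := by
    intro a b ha hab
    have hlr : Real.log r < 0 := Real.log_neg hr hr1
    have hlρ : 0 < Real.log ρ := Real.log_pos hρ
    set α : ℝ := -Real.log r with hα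
    have hαpos : 0 < α := by rw [hα]; linarith
    set θ : ℝ := Real.log ρ / α with hθ
    have hθpos : 0 < θ := div_pos hlρ hαpos
    have hθirr : Irrational θ := theta_irr hr hr1 hρ hNC
    obtain ⟨j, i, h1, h2⟩ := natCombo hθpos hθirr (Real.log a / α)
      (d := (Real.log b - Real.log a)/α)
      (div_pos (by linarith [Real.log_lt_log ha hab]) hαpos)
    refine ⟨i, j, ?_, ?_⟩
    · -- log a < j log ρ + i log r
      have hla : Real.log a < (j:ℝ) * Real.log ρ + (i:ℝ) * Real.log r := by
        have := mul_lt_mul_of_pos_right h1 hαpos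
        rw [div_mul_cancel₀ _ (ne_of_gt hαpos)] at this
        have he : ((j:ℝ)*θ - i) * α = (j:ℝ) * Real.log ρ + (i:ℝ) * Real.log r := by
          rw [hθ, hα]
          have : Real.log r ≠ 0 := by linarith
          field_simp
          ring
        linarith [he ▸ this]
      have hX : Real.log (r^i * ρ^j) = (j:ℝ) * Real.log ρ + (i:ℝ) * Real.log r := by
        rw [Real.log_mul (by positivity) (by positivity), Real.log_pow, Real.log_pow]
        push_cast; ring
      have hXpos : (0:ℝ) < r^i * ρ^j := by positivity
      calc a = Real.exp (Real.log a) := (Real.exp_log ha).symm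
      _ < Real.exp (Real.log (r^i * ρ^j)) := by
          apply Real.exp_lt_exp.mpr; rw [hX]; exact hla
      _ = r^i * ρ^j := Real.exp_log hXpos
    · have hlb : (j:ℝ) * Real.log ρ + (i:ℝ) * Real.log r < Real.log b := by
        have := mul_lt_mul_of_pos_right h2 hαpos
        rw [add_mul, div_mul_cancel₀ _ (ne_of_gt hαpos), div_mul_cancel₀ _ (ne_of_gt hαpos)] at this
        have he : ((j:ℝ)*θ - i) * α = (j:ℝ) * Real.log ρ + (i:ℝ) * Real.log r := by
          rw [hθ, hα]
          have : Real.log r ≠ 0 := by linarith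
          field_simp
          ring
        linarith [he ▸ this]
      have hX : Real.log (r^i * ρ^j) = (j:ℝ) * Real.log ρ + (i:ℝ) * Real.log r := by
        rw [Real.log_mul (by positivity) (by positivity), Real.log_pow, Real.log_pow]
        push_cast; ring
      have hXpos : (0:ℝ) < r^i * ρ^j := by positivity
      have hb : (0:ℝ) < b := lt_trans ha hab
      calc r^i * ρ^j = Real.exp (Real.log (r^i * ρ^j)) := (Real.exp_log hXpos).symm
      _ < Real.exp (Real.log b) := by apply Real.exp_lt_exp.mpr; rw [hX]; exact hlb
      _ = b := Real.exp_log hb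
  have hrρ : 0 < r * ρ := by positivity
  obtain ⟨i, j, h1, h2⟩ := main (a / (r*ρ)) (b / (r*ρ)) (by positivity)
    (by apply div_lt_div_of_pos_right hab hrρ)
  refine ⟨i + 1, j + 1, by omega, by omega, ?_, ?_⟩
  · have : a / (r*ρ) * (r*ρ) < (r^i * ρ^j) * (r*ρ) := mul_lt_mul_of_pos_right h1 hrρ
    rw [div_mul_cancel₀ _ (ne_of_gt hrρ)] at this
    calc a < (r^i * ρ^j) * (r*ρ) := this
    _ = r^(i+1) * ρ^(j+1) := by ring
  · have : (r^i * ρ^j) * (r*ρ) < b / (r*ρ) * (r*ρ) := mul_lt_mul_of_pos_right h2 hrρ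
    rw [div_mul_cancel₀ _ (ne_of_gt hrρ)] at this
    calc r^(i+1) * ρ^(j+1) = (r^i * ρ^j) * (r*ρ) := by ring
    _ < b := this

end Dense15

namespace Dense15
variable {r ρ : ℝ}

def mkM (w : ℤ → ℝ) (hmem : ∀ n, w n ∈ Set.Icc (0:ℝ) 1)
    (hstep : ∀ n, w (n+1) = r * w n ∨ w (n+1) = ρ * w n) : invLimit (shiftM r ρ) :=
  ⟨fun i => ⟨fun j => w ((j:ℤ) - i), fun _ => hmem _, fun j => by
      have hc : (((j+1:ℕ)):ℤ) - i = ((j:ℤ) - i) + 1 := by push_cast; ring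
      show w ((((j+1:ℕ)):ℤ) - (i:ℤ)) = r * w ((j:ℤ) - i) ∨ w ((((j+1:ℕ)):ℤ) - (i:ℤ)) = ρ * w ((j:ℤ) - i)
      rw [hc]; exact hstep ((j:ℤ) - i)⟩,
    fun i => by
      apply Subtype.ext
      funext j
      show w ((j:ℤ) - i) = w (((j+1:ℕ):ℤ) - ((i+1:ℕ):ℤ))
      congr 1; push_cast; ring⟩

lemma Y_mk (w : ℤ → ℝ) (hmem : ∀ n, w n ∈ Set.Icc (0:ℝ) 1)
    (hstep : ∀ n, w (n+1) = r * w n ∨ w (n+1) = ρ * w n) (n : ℤ) :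
    Y (mkM w hmem hstep) n = w n := by
  show w (((n ⊔ 0).toNat : ℤ) - (((-n) ⊔ 0).toNat : ℤ)) = w n
  congr 1; omega

lemma Y_zero_all (hr : 0 < r) (hρ : 0 < ρ) {x : invLimit (shiftM r ρ)}
    (hz : Y x 0 = 0) : ∀ n : ℤ, Y x n = 0 := by
  intro n
  induction n using Int.induction_on with
  | zero => exact hz
  | succ m ih => rcases Y_step x m with h | h <;> rw [h, ih, mul_zero]
  | pred m ih =>
    rw [show -(m:ℤ) - 1 = -(m+1) by ring]
    rcases Y_step x (-(m+1)) with h | h <;>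
    · rw [show (-(m:ℤ)) = -(m+1)+1 by ring] at ih
      rw [h] at ih
      rcases mul_eq_zero.mp ih with h2 | h2
      · nlinarith
      · exact h2

set_option maxHeartbeats 2000000 in
lemma approx (hr : 0 < r) (hr1 : r < 1) (hρ : 1 < ρ)
    (hNC : ∀ k l : ℤ, r ^ k = ρ ^ l ↔ k = 0 ∧ l = 0)
    (x : invLimit (shiftM r ρ)) (k : ℕ) {ε : ℝ} (hε : 0 < ε) :
    ∃ z : invLimit (shiftM r ρ), (∀ ε' : ℝ, 0 < ε' → ∃ n : ℤ, 1 - ε' < Y z n) ∧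
      ∀ n : ℤ, n.natAbs ≤ k → |Y z n - Y x n| < ε := by
  have hρ0 : (0:ℝ) < ρ := by linarith
  have hρne : ρ ≠ 0 := ne_of_gt hρ0
  have hrne : r ≠ 0 := ne_of_gt hr
  by_cases hsup : ∀ ε' : ℝ, 0 < ε' → ∃ n : ℤ, 1 - ε' < Y x n
  · exact ⟨x, hsup, fun n _ => by simpa using hε⟩
  push_neg at hsup
  obtain ⟨ε₀, hε₀pos, hbound⟩ := hsup
  by_cases hx0 : Y x 0 = 0
  · -- vertex case
    have hall : ∀ n, Y x n = 0 := Y_zero_all hr hρ0 hx0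
    obtain ⟨m, hm⟩ := exists_pow_lt_of_lt_one hε (by
      rw [inv_lt_one_iff₀]; right; exact hρ : ρ⁻¹ < 1)
    set K : ℤ := (k:ℤ) + m with hK
    set w : ℤ → ℝ := fun n => if n ≤ K then ρ ^ (n - K) else r ^ (n - K) with hw
    have hmem : ∀ n, w n ∈ Set.Icc (0:ℝ) 1 := by
      intro n
      rw [hw]
      by_cases h : n ≤ K <;> simp only [h, if_true, if_false, reduceIte]
      · exact ⟨le_of_lt (zpow_pos hρ0 _), by
          calc ρ ^ (n - K) ≤ ρ ^ (0:ℤ) := zpow_le_zpow_right₀ (le_of_lt hρ) (by omega)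
          _ = 1 := zpow_zero ρ⟩
      · exact ⟨le_of_lt (zpow_pos hr _), zpow_le_one₀ hr (le_of_lt hr1) (by omega)⟩
    have hstep : ∀ n, w (n+1) = r * w n ∨ w (n+1) = ρ * w n := by
      intro n
      rw [hw]
      rcases lt_trichotomy n K with h | h | h
      · right
        simp only [show n + 1 ≤ K by omega, if_true, show n ≤ K by omega, reduceIte]
        rw [show n + 1 - K = (n - K) + 1 by ring, zpow_add_one₀ hρne]
        ring
      · left
        simp only [show ¬(n + 1 ≤ K) by omega, if_false, show n ≤ K by omega, reduceIte, h]
        simp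
      · left
        simp only [show ¬(n + 1 ≤ K) by omega, show ¬(n ≤ K) by omega, reduceIte]
        rw [show n + 1 - K = (n - K) + 1 by ring, zpow_add_one₀ hrne]
        ring
    refine ⟨mkM w hmem hstep, ?_, ?_⟩
    · intro ε' hε'
      refine ⟨K, ?_⟩
      rw [Y_mk]
      rw [hw]
      simp only [le_refl, if_true, sub_self, zpow_zero, reduceIte]
      linarith
    · intro n hn
      rw [Y_mk, hall n, sub_zero]
      have hnK : n ≤ K := by omega
      rw [hw]
      simp only [hnK, if_true, reduceIte]
      rw [abs_of_pos (zpow_pos hρ0 _)]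
      calc ρ ^ (n - K) ≤ ρ ^ (-(m:ℤ)) := zpow_le_zpow_right₀ (le_of_lt hρ) (by omega)
      _ = (ρ⁻¹) ^ (m:ℕ) := by rw [zpow_neg, ← inv_zpow, zpow_natCast]
      _ < ε := hm
  · -- positive case
    have hx0pos : 0 < Y x 0 := lt_of_le_of_ne (Y_mem x 0).1 (Ne.symm hx0)
    have hpos : ∀ n, 0 < Y x n := Y_pos hr hρ0 hx0pos
    obtain ⟨K, hKdef⟩ : ∃ K : ℤ, K = (k:ℤ) := ⟨_, rfl⟩
    obtain ⟨c, hc⟩ : ∃ c : ℝ, c = Y x K := ⟨_, rfl⟩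
    have hcpos : 0 < c := hc ▸ hpos K
    obtain ⟨L, hL⟩ : ∃ L : ℝ, L = max (1-ε₀) (1/(1+ε)) := ⟨_, rfl⟩
    have hLpos : 0 < L := by
      rw [hL]; exact lt_of_lt_of_le (by positivity) (le_max_right _ _)
    have hL1 : L < 1 := by
      rw [hL]
      apply max_lt (by linarith)
      rw [div_lt_one (by linarith)]; linarith
    obtain ⟨i, j, hi1, hj1, hab1, hab2⟩ := dense_pow hr hr1 hρ hNC
      (a := L / c) (b := 1 / c) (div_pos hLpos hcpos)
      (by apply div_lt_div_of_pos_right hL1 hcpos)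
    obtain ⟨v, hv⟩ : ∃ v : ℝ, v = c * (r^i * ρ^j) := ⟨_, rfl⟩
    have hvL : L < v := by
      have h1 := mul_lt_mul_of_pos_left hab1 hcpos
      rw [mul_div_cancel₀ _ (ne_of_gt hcpos)] at h1
      rw [hv]; linarith [h1]
    have hv1 : v < 1 := by
      have h1 : c * (r^i * ρ^j) < c * (1/c) := mul_lt_mul_of_pos_left hab2 hcpos
      have h2 : c * (1/c) = 1 := by field_simp
      rw [hv]; linarith
    have hvpos : 0 < v := by rw [hv]; exact mul_pos hcpos (by positivity)
    obtain ⟨μ, hμ⟩ : ∃ μ : ℝ, μ = v⁻¹ := ⟨_, rfl⟩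
    have hμpos : 0 < μ := by rw [hμ]; exact inv_pos.mpr hvpos
    have hμ1 : 1 < μ := by
      rw [hμ]
      have h4 : v⁻¹ * v = 1 := inv_mul_cancel₀ (ne_of_gt hvpos)
      have h5 : 0 < v⁻¹ := inv_pos.mpr hvpos
      nlinarith [h4, h5, hv1, hvpos]
    have hμε : μ < 1 + ε := by
      rw [hμ]
      have h1 : 1/(1+ε) ≤ L := by rw [hL]; exact le_max_right _ _
      have h2 : 1/(1+ε) < v := lt_of_le_of_lt h1 hvL
      have h3 : 1 < v * (1+ε) := by
        rw [div_lt_iff₀ (by linarith : (0:ℝ) < 1+ε)] at h2; linarith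
      have h4 : v⁻¹ * v = 1 := inv_mul_cancel₀ (ne_of_gt hvpos)
      have h5 : 0 < v⁻¹ := inv_pos.mpr hvpos
      nlinarith [h3, h4, h5]
    have hμbound : ∀ n : ℤ, μ * Y x n ≤ 1 := by
      intro n
      have h1 : Y x n ≤ 1 - ε₀ := hbound n
      have h2 : (1 - ε₀) ≤ L := by rw [hL]; exact le_max_left _ _
      have h3 : Y x n ≤ L := le_trans h1 h2
      have h4 : μ * Y x n ≤ μ * L := mul_le_mul_of_nonneg_left h3 (le_of_lt hμpos)
      have h5 : μ * L < μ * v := mul_lt_mul_of_pos_left hvL hμpos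
      have h6 : μ * v = 1 := by rw [hμ]; exact inv_mul_cancel₀ (ne_of_gt hvpos)
      linarith
    have hE : μ * Y x K * r ^ (i:ℤ) * ρ ^ (j:ℤ) = 1 := by
      rw [zpow_natCast, zpow_natCast]
      have hmv : μ * v = 1 := by rw [hμ]; exact inv_mul_cancel₀ (ne_of_gt hvpos)
      rw [hv] at hmv
      rw [← hc]
      linear_combination hmv
    set w : ℤ → ℝ := fun n =>
      if n ≤ K then μ * Y x n
      else if n ≤ K + i then μ * Y x K * r ^ (n - K)
      else if n ≤ K + i + j then μ * Y x K * r ^ (i:ℤ) * ρ ^ (n - K - i)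
      else r ^ (n - K - i - j) with hwdef
    have hcμpos : 0 < μ * Y x K := mul_pos hμpos (hpos K)
    have hw2bound : ∀ n : ℤ, K < n → n ≤ K + i → μ * Y x K * r ^ (n - K) ≤ 1 := by
      intro n h1 h2
      have : r ^ (n - K) ≤ 1 := zpow_le_one₀ hr (le_of_lt hr1) (by omega)
      have h3 := hμbound K
      nlinarith [this, h3, hcμpos]
    have hw3bound : ∀ n : ℤ, n ≤ K + i + j → μ * Y x K * r ^ (i:ℤ) * ρ ^ (n - K - i) ≤ 1 := by
      intro n h2
      have h1 : ρ ^ (n - K - i) ≤ ρ ^ (j:ℤ) := zpow_le_zpow_right₀ (le_of_lt hρ) (by omega)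
      have h4 : 0 < μ * Y x K * r ^ (i:ℤ) := mul_pos hcμpos (zpow_pos hr _)
      calc μ * Y x K * r ^ (i:ℤ) * ρ ^ (n - K - i)
          ≤ μ * Y x K * r ^ (i:ℤ) * ρ ^ (j:ℤ) := by nlinarith [h1, h4]
      _ = 1 := hE
    have hmem : ∀ n, w n ∈ Set.Icc (0:ℝ) 1 := by
      intro n
      rw [hwdef]
      simp only
      split_ifs with h1 h2 h3
      · exact ⟨mul_nonneg (le_of_lt hμpos) (le_of_lt (hpos n)), hμbound n⟩
      · exact ⟨mul_nonneg (mul_nonneg (le_of_lt hμpos) (le_of_lt (hpos K)))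
          (le_of_lt (zpow_pos hr _)), hw2bound n (by omega) h2⟩
      · exact ⟨mul_nonneg (mul_nonneg (mul_nonneg (le_of_lt hμpos) (le_of_lt (hpos K)))
          (le_of_lt (zpow_pos hr _))) (le_of_lt (zpow_pos hρ0 _)), hw3bound n h3⟩
      · constructor
        · positivity
        · exact zpow_le_one₀ hr (le_of_lt hr1) (by omega)
    have hstep : ∀ n, w (n+1) = r * w n ∨ w (n+1) = ρ * w n := by
      intro n
      rw [hwdef]
      simp only
      rcases lt_trichotomy n K with h | h | h
      · -- both first branch
        have e1 : n + 1 ≤ K := by omega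
        have e2 : n ≤ K := by omega
        simp only [e1, e2, if_true, reduceIte]
        rcases Y_step x n with hs | hs
        · left; rw [hs]; ring
        · right; rw [hs]; ring
      · -- n = K : go to second branch (i ≥ 1)
        left
        have e1 : ¬(n + 1 ≤ K) := by omega
        have e2 : n + 1 ≤ K + i := by omega
        have e3 : n ≤ K := by omega
        simp only [e1, e2, e3, if_true, if_false, reduceIte]
        rw [h, show K + 1 - K = (1:ℤ) by ring, zpow_one]
        ring
      · rcases lt_trichotomy n (K + i) with h' | h' | h'
        · left
          have e1 : ¬(n + 1 ≤ K) := by omega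
          have e2 : n + 1 ≤ K + i := by omega
          have e3 : ¬(n ≤ K) := by omega
          have e4 : n ≤ K + i := by omega
          simp only [e1, e2, e3, e4, if_true, if_false, reduceIte]
          rw [show n + 1 - K = (n - K) + 1 by ring, zpow_add_one₀ hrne]
          ring
        · right
          have e1 : ¬(n + 1 ≤ K) := by omega
          have e2 : ¬(n + 1 ≤ K + i) := by omega
          have e3 : n + 1 ≤ K + i + j := by omega
          have e4 : ¬(n ≤ K) := by omega
          have e5 : n ≤ K + i := by omega
          simp only [e1, e2, e3, e4, e5, if_true, if_false, reduceIte]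
          rw [h', show K + i + 1 - K - i = (1:ℤ) by ring, zpow_one,
            show K + (i:ℤ) - K = (i:ℤ) by ring]
          ring
        · rcases lt_trichotomy n (K + i + j) with h'' | h'' | h''
          · right
            have e1 : ¬(n + 1 ≤ K) := by omega
            have e2 : ¬(n + 1 ≤ K + i) := by omega
            have e3 : n + 1 ≤ K + i + j := by omega
            have e4 : ¬(n ≤ K) := by omega
            have e5 : ¬(n ≤ K + i) := by omega
            have e6 : n ≤ K + i + j := by omega
            simp only [e1, e2, e3, e4, e5, e6, if_true, if_false, reduceIte]
            rw [show n + 1 - K - i = (n - K - i) + 1 by ring, zpow_add_one₀ hρne]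
            ring
          · left
            have e1 : ¬(n + 1 ≤ K) := by omega
            have e2 : ¬(n + 1 ≤ K + i) := by omega
            have e3 : ¬(n + 1 ≤ K + i + j) := by omega
            have e4 : ¬(n ≤ K) := by omega
            have e5 : ¬(n ≤ K + i) := by omega
            have e6 : n ≤ K + i + j := by omega
            simp only [e1, e2, e3, e4, e5, e6, if_true, if_false, reduceIte]
            rw [h'', show K + i + j + 1 - K - i - j = (1:ℤ) by ring, zpow_one,
              show K + (i:ℤ) + j - K - i = (j:ℤ) by ring]
            rw [hE]
            ring
          · left
            have e1 : ¬(n + 1 ≤ K) := by omega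
            have e2 : ¬(n + 1 ≤ K + i) := by omega
            have e3 : ¬(n + 1 ≤ K + i + j) := by omega
            have e4 : ¬(n ≤ K) := by omega
            have e5 : ¬(n ≤ K + i) := by omega
            have e6 : ¬(n ≤ K + i + j) := by omega
            simp only [e1, e2, e3, e4, e5, e6, if_true, if_false, reduceIte]
            rw [show n + 1 - K - i - j = (n - K - i - j) + 1 by ring, zpow_add_one₀ hrne]
            ring
    refine ⟨mkM w hmem hstep, ?_, ?_⟩
    · intro ε' hε'
      refine ⟨K + i + j, ?_⟩
      rw [Y_mk, hwdef]
      have e1 : ¬(K + (i:ℤ) + j ≤ K) := by omega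
      have e2 : ¬(K + (i:ℤ) + j ≤ K + i) := by omega
      have e3 : K + (i:ℤ) + j ≤ K + i + j := le_refl _
      simp only [e1, e2, e3, if_true, if_false, reduceIte]
      rw [show K + (i:ℤ) + j - K - i = (j:ℤ) by ring, hE]
      linarith
    · intro n hn
      rw [Y_mk, hwdef]
      have e1 : n ≤ K := by omega
      simp only [e1, if_true, reduceIte]
      have h1 : Y x n ≤ 1 := (Y_mem x n).2
      have h2 : 0 < Y x n := hpos n
      have h3 : 0 < (μ - 1) * Y x n := mul_pos (by linarith) h2
      rw [show μ * Y x n - Y x n = (μ - 1) * Y x n by ring, abs_of_pos h3]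
      nlinarith [hμε, hμ1, h1, h2]

end Dense15


/-- The set of end-points of `M = varprojlim(M_{r,ρ}, σ_{r,ρ})` is dense in `M`. -/
theorem stmt15 (r ρ : ℝ) (h : NC r ρ) :
    Dense {x : invLimit (shiftM r ρ) | IsEndpoint x} := by
  obtain ⟨hr, hr1, hρ, hNC⟩ := h
  intro x
  have hz : ∀ m : ℕ, ∃ z : invLimit (shiftM r ρ), IsEndpoint z ∧
      ∀ n : ℤ, n.natAbs ≤ m → |Dense15.Y z n - Dense15.Y x n| < 1/(m+1) := by
    intro m
    obtain ⟨z, hz1, hz2⟩ := Dense15.approx hr hr1 hρ hNC x m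
      (by positivity : (0:ℝ) < 1/(m+1))
    exact ⟨z, Dense15.endpoint_of_sup hr hr1 hρ z hz1, hz2⟩
  choose z hz1 hz2 using hz
  have key : ∀ nn : ℤ, Filter.Tendsto (fun m => Dense15.Y (z m) nn) Filter.atTop
      (nhds (Dense15.Y x nn)) := by
    intro nn
    rw [Metric.tendsto_atTop]
    intro ε hε
    obtain ⟨N₀, hN₀⟩ := exists_nat_one_div_lt hε
    refine ⟨max N₀ nn.natAbs, fun m hm => ?_⟩
    have h1 : nn.natAbs ≤ m := le_trans (le_max_right _ _) hm
    have h2 := hz2 m nn h1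
    have h3 : 1/((m:ℝ)+1) ≤ 1/((N₀:ℝ)+1) := by
      apply one_div_le_one_div_of_le (by positivity)
      have : N₀ ≤ m := le_trans (le_max_left _ _) hm
      exact_mod_cast by push_cast; linarith [(by exact_mod_cast this : (N₀:ℝ) ≤ m)]
    rw [Real.dist_eq]
    calc |Dense15.Y (z m) nn - Dense15.Y x nn| < 1/(m+1) := h2
    _ ≤ 1/(N₀+1) := h3
    _ < ε := hN₀
  have htend : Filter.Tendsto z Filter.atTop (nhds x) := by
    rw [tendsto_subtype_rng, tendsto_pi_nhds]
    intro i
    rw [tendsto_subtype_rng, tendsto_pi_nhds]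
    intro j
    have he : ∀ m, ((((z m) : ℕ → Mset r ρ) i : ℕ → ℝ) j) = Dense15.Y (z m) ((j:ℤ) - i) :=
      fun m => (Dense15.Y_eq _ i j).symm
    simp only [he]
    rw [show ((((x : ℕ → Mset r ρ) i : ℕ → ℝ)) j) = Dense15.Y x ((j:ℤ) - i) from
      (Dense15.Y_eq _ i j).symm]
    exact key _
  exact mem_closure_of_tendsto htend (Filter.Eventually.of_forall (fun m => hz1 m))
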